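/- Suppose (U_n)_{n≥1} is strongly asymptotically stationary, i.e., for every b ∈ C_c(ℝ^D): (SuA2) for every fixed m, the limit lim_{n→∞} ∫_Q b(U_n) b(U_m) dy exists; and (SuA3) there exists a function ω(b,·) with ω(b,k) → 0 as k → ∞ such that |∫_Q [b(U_{k_1}) b(U_{k_2}) − b(U_{k_1+n}) b(U_{k_2+n})] dy| ≤ ω(b,k) for all 1 ≤ k ≤ k_1 ≤ k_2 and all n ≥ 0. Then (U_n) is strongly (S)-convergent; in particular, for every b ∈ C_c(ℝ^D) there exists \bar{b} ∈ L^∞(Q), independent of w, such that for every w ∈ W, (1/w_N) Σ_{n=1}^N w(n/N) b(U_n) → \bar{b} strongly in L¹(Q) as N → ∞. -/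

import Mathlib

open MeasureTheory Filter Topology

noncomputable section

/-- The class `W` of weight functions: `w ∈ C¹([0,1])`, `w ≥ 0` on `[0,1]`,
`∫_0^1 w(z) dz = 1`. -/
def IsWeight (w : ℝ → ℝ) : Prop :=
  ContDiffOn ℝ 1 w (Set.Icc 0 1) ∧ (∀ z ∈ Set.Icc (0 : ℝ) 1, 0 ≤ w z) ∧
    (∫ z in (0 : ℝ)..1, w z) = 1

/-- `w_N = ∑_{n=1}^N w(n/N)`. -/
def wsum (w : ℝ → ℝ) (N : ℕ) : ℝ := ∑ n ∈ Finset.Icc 1 N, w ((n : ℝ) / (N : ℝ))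

/-- Strong (S)-convergence of a sequence `(U_n)_{n ≥ 1}` of measurable functions `Q → ℝ^D`. -/
def StronglySConv {M D : ℕ} (Q : Set (Fin M → ℝ))
    (U : ℕ → (Fin M → ℝ) → EuclideanSpace ℝ (Fin D)) : Prop :=
  ∀ b : EuclideanSpace ℝ (Fin D) → ℝ, Continuous b → HasCompactSupport b →
    ∃ ℓ : ℕ → ℝ,
      (∀ w : ℝ → ℝ, IsWeight w → ∀ m : ℕ, 1 ≤ m →
        Tendsto (fun N : ℕ => (wsum w N)⁻¹ *
            ∑ n ∈ Finset.Icc 1 N, w ((n : ℝ) / (N : ℝ)) * ∫ y in Q, b (U n y) * b (U m y))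
          atTop (𝓝 (ℓ m))) ∧
      (∀ w : ℝ → ℝ, IsWeight w → ∃ L : ℝ,
        Tendsto (fun N : ℕ => ((wsum w N) ^ 2)⁻¹ *
            ∑ n ∈ Finset.Icc 1 N, ∑ m ∈ Finset.Icc 1 N,
              w ((n : ℝ) / (N : ℝ)) * w ((m : ℝ) / (N : ℝ)) *
                ∫ y in Q, b (U n y) * b (U m y)) atTop (𝓝 L) ∧
        Tendsto (fun K : ℕ => (wsum w K)⁻¹ *
            ∑ m ∈ Finset.Icc 1 K, w ((m : ℝ) / (K : ℝ)) * ℓ m) atTop (𝓝 L))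

lemma div_mem_Icc01 {n N : ℕ} (h1 : 1 ≤ n) (h2 : n ≤ N) :
    ((n : ℝ) / (N : ℝ)) ∈ Set.Icc (0 : ℝ) 1 := by
  have hN : (0:ℝ) < N := by exact_mod_cast lt_of_lt_of_le h1 h2
  exact ⟨div_nonneg (by positivity) hN.le, (div_le_one hN).mpr (by exact_mod_cast h2)⟩

lemma IsWeight.exists_bound {w : ℝ → ℝ} (hw : IsWeight w) :
    ∃ C : ℝ, 0 ≤ C ∧ ∀ z ∈ Set.Icc (0:ℝ) 1, w z ≤ C := by
  obtain ⟨C, hC⟩ := isCompact_Icc.exists_bound_of_continuousOn hw.1.continuousOn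
  refine ⟨max C 0, le_max_right _ _, fun z hz => ?_⟩
  exact le_trans (le_trans (le_abs_self _) (hC z hz)) (le_max_left _ _)

lemma wsum_nonneg {w : ℝ → ℝ} (hw0 : ∀ z ∈ Set.Icc (0:ℝ) 1, 0 ≤ w z) (N : ℕ) :
    0 ≤ wsum w N :=
  Finset.sum_nonneg fun n hn => by
    obtain ⟨h1, h2⟩ := Finset.mem_Icc.mp hn
    exact hw0 _ (div_mem_Icc01 h1 h2)

set_option maxHeartbeats 800000 in
lemma IsWeight.wsum_tendsto_atTop {w : ℝ → ℝ} (hw : IsWeight w) :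
    Tendsto (wsum w) atTop atTop := by
  obtain ⟨hw1, hw0, hwI⟩ := hw
  -- find a point of positivity
  have hz0 : ∃ z₀ ∈ Set.Icc (0:ℝ) 1, 0 < w z₀ := by
    by_contra h
    push_neg at h
    have hzero : Set.EqOn w (fun _ => (0:ℝ)) (Set.uIcc (0:ℝ) 1) := by
      intro z hz
      rw [Set.uIcc_of_le (by norm_num : (0:ℝ) ≤ 1)] at hz
      exact le_antisymm (h z hz) (hw0 z hz)
    have h0 := intervalIntegral.integral_congr (μ := volume) hzero
    rw [hwI] at h0
    simp at h0
  obtain ⟨z₀, hz₀mem, hz₀pos⟩ := hz0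
  set ε := w z₀ / 2 with hεdef
  have hεpos : 0 < ε := by positivity
  -- find δ
  have hev : ∀ᶠ z in nhdsWithin z₀ (Set.Icc 0 1), ε < w z :=
    (hw1.continuousOn z₀ hz₀mem).eventually (eventually_gt_nhds (by simp [hεdef]; linarith))
  rw [Filter.Eventually, Metric.mem_nhdsWithin_iff] at hev
  obtain ⟨δ, hδpos, hδ⟩ := hev
  set d : ℝ := min (δ/2) 1 with hddef
  have hdpos : 0 < d := by positivity
  have hd1 : d ≤ 1 := min_le_right _ _
  have hdδ : d < δ := lt_of_le_of_lt (min_le_left _ _) (by linarith)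
  set b : ℝ := max z₀ d with hbdef
  set a : ℝ := b - d/2 with hadef
  have hz₀0 : 0 ≤ z₀ := hz₀mem.1
  have hz₀1 : z₀ ≤ 1 := hz₀mem.2
  have hb1 : z₀ ≤ b := le_max_left _ _
  have hb2 : d ≤ b := le_max_right _ _
  have hb3 : b ≤ z₀ + d := max_le (by linarith) (by linarith)
  have hbb1 : b ≤ 1 := max_le hz₀1 hd1
  have hapos : 0 < a := by simp only [hadef]; linarith
  -- all points of [a,b] give w ≥ ε
  have hkey : ∀ z : ℝ, a ≤ z → z ≤ b → ε ≤ w z := by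
    intro z hza hzb
    have hz01 : z ∈ Set.Icc (0:ℝ) 1 := ⟨by linarith, by linarith⟩
    have hdist : dist z z₀ < δ := by
      rw [Real.dist_eq, abs_sub_lt_iff]
      constructor <;> simp only [hadef] at hza <;> linarith
    exact (hδ ⟨Metric.mem_ball.mpr hdist, hz01⟩).le
  clear_value ε d b a
  -- eventual lower bound for wsum
  have hlow : ∀ᶠ N : ℕ in atTop, ε * ((d/2) * N - 2) ≤ wsum w N := by
    rw [eventually_atTop]
    refine ⟨⌈a⁻¹⌉₊ + 1, fun N hN => ?_⟩
    have hNa : (1:ℝ) ≤ a * N := by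
      have h1 : a⁻¹ ≤ (N:ℝ) := by
        calc a⁻¹ ≤ (⌈a⁻¹⌉₊ : ℝ) := Nat.le_ceil _
        _ ≤ (N:ℝ) := by exact_mod_cast le_trans (Nat.le_succ _) hN
      calc (1:ℝ) = a * a⁻¹ := by field_simp
      _ ≤ a * N := by apply mul_le_mul_of_nonneg_left h1 hapos.le
    have hNpos : (0:ℝ) < N := by nlinarith
    set K1 := ⌈a * N⌉₊ with hK1
    set K2 := ⌊b * N⌋₊ with hK2
    have hK1a : a * N ≤ (K1:ℝ) := by rw [hK1]; exact Nat.le_ceil _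
    have hK1b : (K1 : ℝ) ≤ a * N + 1 := by
      rw [hK1]; exact (Nat.ceil_lt_add_one (by nlinarith)).le
    have hK1pos : 1 ≤ K1 := by rw [hK1]; exact Nat.ceil_pos.mpr (by nlinarith)
    have hK2a : b * N - 1 ≤ (K2:ℝ) := by rw [hK2]; exact (Nat.sub_one_lt_floor _).le
    have hK2b : (K2 : ℝ) ≤ b * N := by rw [hK2]; exact Nat.floor_le (by nlinarith)
    clear_value K1 K2
    have hK2N : K2 ≤ N := by
      have hbN : b * N ≤ (N:ℝ) := by nlinarith
      exact_mod_cast le_trans hK2b hbN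
    have hsub : Finset.Icc K1 K2 ⊆ Finset.Icc 1 N := by
      intro n hn
      rw [Finset.mem_Icc] at hn ⊢
      omega
    have hterm : ∀ n ∈ Finset.Icc K1 K2, ε ≤ w ((n:ℝ)/(N:ℝ)) := by
      intro n hn
      rw [Finset.mem_Icc] at hn
      apply hkey
      · rw [le_div_iff₀ hNpos]
        calc a * N ≤ (K1 : ℝ) := hK1a
        _ ≤ (n : ℝ) := by exact_mod_cast hn.1
      · rw [div_le_iff₀ hNpos]
        calc (n:ℝ) ≤ (K2 : ℝ) := by exact_mod_cast hn.2
        _ ≤ b * N := hK2b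
    have hcard : ε * ((d/2) * N - 2) ≤ (Finset.Icc K1 K2).card • ε := by
      have hcard2 : (d/2) * N - 2 ≤ ((Finset.Icc K1 K2).card : ℝ) := by
        rw [Nat.card_Icc]
        have hup : (K1 : ℝ) ≤ a * N + 1 := hK1b
        have hdn : b * N - 1 ≤ (K2 : ℝ) := hK2a
        have hba : b - a = d/2 := by simp [hadef]
        have hprod : b * N - a * N = d/2 * N := by rw [← hba]; ring
        rcases le_or_gt K1 (K2+1) with hc | hc
        · have heq : ((K2 + 1 - K1 : ℕ) : ℝ) = (K2:ℝ) + 1 - K1 := by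
            push_cast [Nat.cast_sub hc]
            ring
          rw [heq]
          linarith
        · have h0 : K2 + 1 - K1 = 0 := Nat.sub_eq_zero_of_le hc.le
          have hlt : (K2:ℝ) + 1 < K1 := by exact_mod_cast hc
          rw [h0, Nat.cast_zero]
          linarith
      calc ε * ((d/2) * N - 2) ≤ ε * ((Finset.Icc K1 K2).card : ℝ) := by
            apply mul_le_mul_of_nonneg_left hcard2 hεpos.le
      _ = (Finset.Icc K1 K2).card • ε := by rw [nsmul_eq_mul]; ring
    calc ε * ((d/2) * N - 2) ≤ (Finset.Icc K1 K2).card • ε := hcard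
    _ ≤ ∑ n ∈ Finset.Icc K1 K2, w ((n:ℝ)/(N:ℝ)) := Finset.card_nsmul_le_sum _ _ _ hterm
    _ ≤ wsum w N := Finset.sum_le_sum_of_subset_of_nonneg hsub (fun n hn _ => by
        obtain ⟨h1, h2⟩ := Finset.mem_Icc.mp hn
        exact hw0 _ (div_mem_Icc01 h1 h2))
  have hRHS : Tendsto (fun N : ℕ => ε * ((d/2) * N - 2)) atTop atTop := by
    apply Tendsto.const_mul_atTop hεpos
    apply tendsto_atTop_add_const_right
    exact Tendsto.const_mul_atTop (by positivity) tendsto_natCast_atTop_atTop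
  exact tendsto_atTop_mono' _ hlow hRHS

lemma weighted_avg_tendsto {w : ℝ → ℝ} (hw : IsWeight w) {a : ℕ → ℝ} {l : ℝ}
    (ha : Tendsto a atTop (𝓝 l)) :
    Tendsto (fun N : ℕ => (wsum w N)⁻¹ * ∑ n ∈ Finset.Icc 1 N, w ((n:ℝ)/(N:ℝ)) * a n)
      atTop (𝓝 l) := by
  obtain ⟨Cw, hCw0, hCw⟩ := hw.exists_bound
  have hws := hw.wsum_tendsto_atTop
  have hw0 := hw.2.1
  have habs : Tendsto (fun n => |a n - l|) atTop (𝓝 0) := by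
    have h1 : Tendsto (fun n => a n - l) atTop (𝓝 (l - l)) := ha.sub_const l
    rw [sub_self] at h1
    have := h1.abs
    rwa [abs_zero] at this
  obtain ⟨A, hAub⟩ := habs.bddAbove_range
  have hAle : ∀ n, |a n - l| ≤ A := fun n => hAub (Set.mem_range_self n)
  have hA0 : 0 ≤ A := le_trans (abs_nonneg _) (hAle 0)
  rw [Metric.tendsto_atTop]
  intro ε hε
  obtain ⟨K, hK⟩ := Metric.tendsto_atTop.mp ha (ε/4) (by linarith)
  obtain ⟨N₀, hN₀⟩ := eventually_atTop.mp
    (Filter.tendsto_atTop.mp hws (max 1 ((K:ℝ) * Cw * A / (ε/4))))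
  refine ⟨N₀, fun N hN => ?_⟩
  have hwN := hN₀ N hN
  have hwpos : 0 < wsum w N := lt_of_lt_of_le one_pos (le_trans (le_max_left _ _) hwN)
  have hwn : ∀ n ∈ Finset.Icc 1 N, 0 ≤ w ((n:ℝ)/(N:ℝ)) ∧ w ((n:ℝ)/(N:ℝ)) ≤ Cw := by
    intro n hn
    obtain ⟨h1, h2⟩ := Finset.mem_Icc.mp hn
    exact ⟨hw0 _ (div_mem_Icc01 h1 h2), hCw _ (div_mem_Icc01 h1 h2)⟩
  rw [Real.dist_eq]
  have h1 : (wsum w N)⁻¹ * (∑ n ∈ Finset.Icc 1 N, w ((n:ℝ)/(N:ℝ)) * a n) - l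
      = (wsum w N)⁻¹ * (∑ n ∈ Finset.Icc 1 N, w ((n:ℝ)/(N:ℝ)) * (a n - l)) := by
    have expand : ∑ n ∈ Finset.Icc 1 N, w ((n:ℝ)/(N:ℝ)) * (a n - l)
        = (∑ n ∈ Finset.Icc 1 N, w ((n:ℝ)/(N:ℝ)) * a n) - wsum w N * l := by
      rw [wsum, Finset.sum_mul, ← Finset.sum_sub_distrib]
      exact Finset.sum_congr rfl fun n _ => by ring
    rw [expand, mul_sub]
    field_simp
  rw [h1, abs_mul, abs_inv, abs_of_pos hwpos]
  have h2 : |∑ n ∈ Finset.Icc 1 N, w ((n:ℝ)/(N:ℝ)) * (a n - l)|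
      ≤ ∑ n ∈ Finset.Icc 1 N, w ((n:ℝ)/(N:ℝ)) * |a n - l| := by
    refine (Finset.abs_sum_le_sum_abs _ _).trans (Finset.sum_le_sum fun n hn => ?_)
    rw [abs_mul, abs_of_nonneg (hwn n hn).1]
  have h3 : ∑ n ∈ Finset.Icc 1 N, w ((n:ℝ)/(N:ℝ)) * |a n - l|
      ≤ (K:ℝ) * (Cw * A) + (ε/4) * wsum w N := by
    rw [← Finset.sum_filter_add_sum_filter_not (Finset.Icc 1 N) (fun n => n < K)]
    have hpart1 : ∑ n ∈ (Finset.Icc 1 N).filter (fun n => n < K),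
        w ((n:ℝ)/(N:ℝ)) * |a n - l| ≤ (K:ℝ) * (Cw * A) := by
      have hcard : ((Finset.Icc 1 N).filter (fun n => n < K)).card ≤ K := by
        have hsub : (Finset.Icc 1 N).filter (fun n => n < K) ⊆ Finset.Icc 1 K := by
          intro n hn
          rw [Finset.mem_filter, Finset.mem_Icc] at hn
          rw [Finset.mem_Icc]
          omega
        calc _ ≤ (Finset.Icc 1 K).card := Finset.card_le_card hsub
        _ = K := by rw [Nat.card_Icc]; omega
      have hbd : ∀ n ∈ (Finset.Icc 1 N).filter (fun n => n < K),
          w ((n:ℝ)/(N:ℝ)) * |a n - l| ≤ Cw * A := by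
        intro n hn
        rw [Finset.mem_filter] at hn
        exact mul_le_mul (hwn n hn.1).2 (hAle n) (abs_nonneg _) hCw0
      calc _ ≤ ((Finset.Icc 1 N).filter (fun n => n < K)).card • (Cw * A) :=
            Finset.sum_le_card_nsmul _ _ _ hbd
      _ = (((Finset.Icc 1 N).filter (fun n => n < K)).card : ℝ) * (Cw * A) := by
            rw [nsmul_eq_mul]
      _ ≤ (K:ℝ) * (Cw * A) := by
            apply mul_le_mul_of_nonneg_right _ (by positivity)
            exact_mod_cast hcard
    have hpart2 : ∑ n ∈ (Finset.Icc 1 N).filter (fun n => ¬ n < K),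
        w ((n:ℝ)/(N:ℝ)) * |a n - l| ≤ (ε/4) * wsum w N := by
      have step1 : ∑ n ∈ (Finset.Icc 1 N).filter (fun n => ¬ n < K),
          w ((n:ℝ)/(N:ℝ)) * |a n - l|
          ≤ ∑ n ∈ (Finset.Icc 1 N).filter (fun n => ¬ n < K),
            w ((n:ℝ)/(N:ℝ)) * (ε/4) := by
        refine Finset.sum_le_sum fun n hn => ?_
        rw [Finset.mem_filter] at hn
        have hdist := hK n (by omega)
        rw [Real.dist_eq] at hdist
        exact mul_le_mul_of_nonneg_left hdist.le (hwn n hn.1).1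
      have step2 : ∑ n ∈ (Finset.Icc 1 N).filter (fun n => ¬ n < K),
          w ((n:ℝ)/(N:ℝ)) * (ε/4) ≤ (ε/4) * wsum w N := by
        rw [← Finset.sum_mul, mul_comm]
        apply mul_le_mul_of_nonneg_left _ (by linarith : (0:ℝ) ≤ ε/4)
        apply Finset.sum_le_sum_of_subset_of_nonneg (Finset.filter_subset _ _)
        intro n hn _
        exact (hwn n hn).1
      exact step1.trans step2
    linarith
  calc (wsum w N)⁻¹ * |∑ n ∈ Finset.Icc 1 N, w ((n:ℝ)/(N:ℝ)) * (a n - l)|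
      ≤ (wsum w N)⁻¹ * ((K:ℝ) * (Cw * A) + (ε/4) * wsum w N) := by
        exact mul_le_mul_of_nonneg_left (h2.trans h3) (by positivity)
  _ = (K:ℝ) * Cw * A / wsum w N + ε/4 := by field_simp
  _ ≤ ε/4 + ε/4 := by
        have hge : (K:ℝ) * Cw * A / (ε/4) ≤ wsum w N := le_trans (le_max_right _ _) hwN
        have h5 : (K:ℝ) * Cw * A ≤ (ε/4) * wsum w N := by
          rw [div_le_iff₀ (by linarith : (0:ℝ) < ε/4)] at hge
          linarith
        have h6 : (K:ℝ) * Cw * A / wsum w N ≤ ε/4 := by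
          rw [div_le_iff₀ hwpos]
          linarith
        linarith
  _ < ε := by linarith

set_option maxHeartbeats 1600000 in
lemma double_avg_tendsto {w w' : ℝ → ℝ} (hw : IsWeight w) (hw' : IsWeight w')
    {c : ℕ → ℕ → ℝ} {Cc L : ℝ} (hc : ∀ n m, |c n m| ≤ Cc)
    (hgood : ∀ ε > 0, ∃ K : ℕ, ∀ n m : ℕ, K ≤ n → K ≤ m → (n + K ≤ m ∨ m + K ≤ n) →
      |c n m - L| ≤ ε) :
    Tendsto (fun p : ℕ × ℕ => (wsum w p.1)⁻¹ * (wsum w' p.2)⁻¹ *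
        ∑ n ∈ Finset.Icc 1 p.1, ∑ m ∈ Finset.Icc 1 p.2,
          w ((n:ℝ)/(p.1:ℝ)) * w' ((m:ℝ)/(p.2:ℝ)) * c n m)
      (atTop ×ˢ atTop) (𝓝 L) := by
  obtain ⟨Cw, hCw0, hCw⟩ := hw.exists_bound
  obtain ⟨Cw', hCw'0, hCw'⟩ := hw'.exists_bound
  have hws := hw.wsum_tendsto_atTop
  have hws' := hw'.wsum_tendsto_atTop
  have hw0 := hw.2.1
  have hw'0 := hw'.2.1
  set Cb := Cc + |L| with hCb
  have hCb0 : 0 ≤ Cb := le_trans (abs_nonneg (c 0 0)) (by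
    have := hc 0 0
    have := abs_nonneg L
    linarith)
  have hcL : ∀ n m, |c n m - L| ≤ Cb := fun n m =>
    (abs_sub _ _).trans (by have := hc n m; simp only [hCb]; linarith)
  rw [Metric.tendsto_nhds]
  intro ε hε
  obtain ⟨K, hK⟩ := hgood (ε/2) (by linarith)
  have h1 : ∀ᶠ p : ℕ × ℕ in atTop ×ˢ atTop,
      max 1 ((K:ℝ) * Cw * Cb / (ε/8)) ≤ wsum w p.1 :=
    (Filter.tendsto_atTop.mp hws _).prod_inl _
  have h2 : ∀ᶠ p : ℕ × ℕ in atTop ×ˢ atTop,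
      max 1 ((3*(K:ℝ)) * Cw' * Cb / (ε/8)) ≤ wsum w' p.2 :=
    (Filter.tendsto_atTop.mp hws' _).prod_inr _
  filter_upwards [h1, h2] with p hp1 hp2
  obtain ⟨N, N'⟩ := p
  simp only at hp1 hp2 ⊢
  have hWpos : 0 < wsum w N := lt_of_lt_of_le one_pos (le_trans (le_max_left _ _) hp1)
  have hW'pos : 0 < wsum w' N' := lt_of_lt_of_le one_pos (le_trans (le_max_left _ _) hp2)
  set I := Finset.Icc 1 N with hI
  set J := Finset.Icc 1 N' with hJ
  have hwn : ∀ n ∈ I, 0 ≤ w ((n:ℝ)/(N:ℝ)) ∧ w ((n:ℝ)/(N:ℝ)) ≤ Cw := by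
    intro n hn
    obtain ⟨ha, hb⟩ := Finset.mem_Icc.mp hn
    exact ⟨hw0 _ (div_mem_Icc01 ha hb), hCw _ (div_mem_Icc01 ha hb)⟩
  have hwm : ∀ m ∈ J, 0 ≤ w' ((m:ℝ)/(N':ℝ)) ∧ w' ((m:ℝ)/(N':ℝ)) ≤ Cw' := by
    intro m hm
    obtain ⟨ha, hb⟩ := Finset.mem_Icc.mp hm
    exact ⟨hw'0 _ (div_mem_Icc01 ha hb), hCw' _ (div_mem_Icc01 ha hb)⟩
  rw [Real.dist_eq]
  -- step 1 : rewrite the difference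
  have key : ∑ n ∈ I, ∑ m ∈ J, w ((n:ℝ)/(N:ℝ)) * w' ((m:ℝ)/(N':ℝ)) * (c n m - L)
      = (∑ n ∈ I, ∑ m ∈ J, w ((n:ℝ)/(N:ℝ)) * w' ((m:ℝ)/(N':ℝ)) * c n m)
        - (wsum w N * wsum w' N') * L := by
    rw [wsum, wsum, Finset.sum_mul_sum, Finset.sum_mul, ← Finset.sum_sub_distrib]
    refine Finset.sum_congr rfl fun n _ => ?_
    rw [Finset.sum_mul, ← Finset.sum_sub_distrib]
    exact Finset.sum_congr rfl fun m _ => by ring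
  have hdiff : (wsum w N)⁻¹ * (wsum w' N')⁻¹ *
      (∑ n ∈ I, ∑ m ∈ J, w ((n:ℝ)/(N:ℝ)) * w' ((m:ℝ)/(N':ℝ)) * c n m) - L
      = (wsum w N)⁻¹ * (wsum w' N')⁻¹ *
        (∑ n ∈ I, ∑ m ∈ J, w ((n:ℝ)/(N:ℝ)) * w' ((m:ℝ)/(N':ℝ)) * (c n m - L)) := by
    rw [key, mul_sub]
    field_simp
  rw [hdiff, abs_mul, abs_mul, abs_inv, abs_inv, abs_of_pos hWpos, abs_of_pos hW'pos]
  -- step 2 : abs into the sums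
  have habs : |∑ n ∈ I, ∑ m ∈ J, w ((n:ℝ)/(N:ℝ)) * w' ((m:ℝ)/(N':ℝ)) * (c n m - L)|
      ≤ ∑ n ∈ I, ∑ m ∈ J, w ((n:ℝ)/(N:ℝ)) * w' ((m:ℝ)/(N':ℝ)) * |c n m - L| := by
    refine (Finset.abs_sum_le_sum_abs _ _).trans (Finset.sum_le_sum fun n hn => ?_)
    refine (Finset.abs_sum_le_sum_abs _ _).trans (Finset.sum_le_sum fun m hm => ?_)
    rw [abs_mul, abs_mul, abs_of_nonneg (hwn n hn).1, abs_of_nonneg (hwm m hm).1]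
  -- step 3 : pointwise splitting good/bad
  have hpoint : ∀ n ∈ I, ∀ m ∈ J,
      w ((n:ℝ)/(N:ℝ)) * w' ((m:ℝ)/(N':ℝ)) * |c n m - L|
      ≤ w ((n:ℝ)/(N:ℝ)) * w' ((m:ℝ)/(N':ℝ)) * (ε/2)
        + ((if n < K then w ((n:ℝ)/(N:ℝ)) * w' ((m:ℝ)/(N':ℝ)) * Cb else 0)
          + (if m < K then w ((n:ℝ)/(N:ℝ)) * w' ((m:ℝ)/(N':ℝ)) * Cb else 0)
          + (if n < m + K ∧ m < n + K then
              w ((n:ℝ)/(N:ℝ)) * w' ((m:ℝ)/(N':ℝ)) * Cb else 0)) := by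
    intro n hn m hm
    have hww0 : 0 ≤ w ((n:ℝ)/(N:ℝ)) * w' ((m:ℝ)/(N':ℝ)) :=
      mul_nonneg (hwn n hn).1 (hwm m hm).1
    by_cases hb1 : n < K
    · have : w ((n:ℝ)/(N:ℝ)) * w' ((m:ℝ)/(N':ℝ)) * |c n m - L|
          ≤ w ((n:ℝ)/(N:ℝ)) * w' ((m:ℝ)/(N':ℝ)) * Cb :=
        mul_le_mul_of_nonneg_left (hcL n m) hww0
      have hrest : (0:ℝ) ≤ (if m < K then w ((n:ℝ)/(N:ℝ)) * w' ((m:ℝ)/(N':ℝ)) * Cb else 0)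
          + (if n < m + K ∧ m < n + K then
              w ((n:ℝ)/(N:ℝ)) * w' ((m:ℝ)/(N':ℝ)) * Cb else 0) := by
        positivity
      simp only [if_pos hb1]
      nlinarith [mul_nonneg hww0 (by linarith : (0:ℝ) ≤ ε/2)]
    · by_cases hb2 : m < K
      · have : w ((n:ℝ)/(N:ℝ)) * w' ((m:ℝ)/(N':ℝ)) * |c n m - L|
            ≤ w ((n:ℝ)/(N:ℝ)) * w' ((m:ℝ)/(N':ℝ)) * Cb :=
          mul_le_mul_of_nonneg_left (hcL n m) hww0
        have hrest : (0:ℝ) ≤ (if n < K then w ((n:ℝ)/(N:ℝ)) * w' ((m:ℝ)/(N':ℝ)) * Cb else 0)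
            + (if n < m + K ∧ m < n + K then
                w ((n:ℝ)/(N:ℝ)) * w' ((m:ℝ)/(N':ℝ)) * Cb else 0) := by
          positivity
        simp only [if_pos hb2]
        nlinarith [mul_nonneg hww0 (by linarith : (0:ℝ) ≤ ε/2)]
      · by_cases hb3 : n < m + K ∧ m < n + K
        · have : w ((n:ℝ)/(N:ℝ)) * w' ((m:ℝ)/(N':ℝ)) * |c n m - L|
              ≤ w ((n:ℝ)/(N:ℝ)) * w' ((m:ℝ)/(N':ℝ)) * Cb :=
            mul_le_mul_of_nonneg_left (hcL n m) hww0
          have hrest : (0:ℝ) ≤ (if n < K then w ((n:ℝ)/(N:ℝ)) * w' ((m:ℝ)/(N':ℝ)) * Cb else 0)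
              + (if m < K then w ((n:ℝ)/(N:ℝ)) * w' ((m:ℝ)/(N':ℝ)) * Cb else 0) := by
            positivity
          simp only [if_pos hb3]
          nlinarith [mul_nonneg hww0 (by linarith : (0:ℝ) ≤ ε/2)]
        · have hgoodnm : |c n m - L| ≤ ε/2 :=
            hK n m (by omega) (by omega) (by omega)
          have : w ((n:ℝ)/(N:ℝ)) * w' ((m:ℝ)/(N':ℝ)) * |c n m - L|
              ≤ w ((n:ℝ)/(N:ℝ)) * w' ((m:ℝ)/(N':ℝ)) * (ε/2) :=
            mul_le_mul_of_nonneg_left hgoodnm hww0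
          simp only [if_neg hb1, if_neg hb2, if_neg hb3]
          linarith
  -- step 4 : sum the splitting
  have hsum1 : ∑ n ∈ I, ∑ m ∈ J, w ((n:ℝ)/(N:ℝ)) * w' ((m:ℝ)/(N':ℝ)) * |c n m - L|
      ≤ wsum w N * wsum w' N' * (ε/2)
        + ((K:ℝ) * Cw * Cb * wsum w' N' + (K:ℝ) * Cw' * Cb * wsum w N
            + 2*(K:ℝ) * Cw' * Cb * wsum w N) := by
    have hstep : ∑ n ∈ I, ∑ m ∈ J, w ((n:ℝ)/(N:ℝ)) * w' ((m:ℝ)/(N':ℝ)) * |c n m - L|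
        ≤ (∑ n ∈ I, ∑ m ∈ J, w ((n:ℝ)/(N:ℝ)) * w' ((m:ℝ)/(N':ℝ)) * (ε/2))
          + ((∑ n ∈ I, ∑ m ∈ J, if n < K then w ((n:ℝ)/(N:ℝ)) * w' ((m:ℝ)/(N':ℝ)) * Cb else 0)
            + (∑ n ∈ I, ∑ m ∈ J, if m < K then w ((n:ℝ)/(N:ℝ)) * w' ((m:ℝ)/(N':ℝ)) * Cb else 0)
            + (∑ n ∈ I, ∑ m ∈ J, if n < m + K ∧ m < n + K then
                w ((n:ℝ)/(N:ℝ)) * w' ((m:ℝ)/(N':ℝ)) * Cb else 0)) := by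
      calc ∑ n ∈ I, ∑ m ∈ J, w ((n:ℝ)/(N:ℝ)) * w' ((m:ℝ)/(N':ℝ)) * |c n m - L|
          ≤ ∑ n ∈ I, ∑ m ∈ J, (w ((n:ℝ)/(N:ℝ)) * w' ((m:ℝ)/(N':ℝ)) * (ε/2)
            + ((if n < K then w ((n:ℝ)/(N:ℝ)) * w' ((m:ℝ)/(N':ℝ)) * Cb else 0)
              + (if m < K then w ((n:ℝ)/(N:ℝ)) * w' ((m:ℝ)/(N':ℝ)) * Cb else 0)
              + (if n < m + K ∧ m < n + K then
                  w ((n:ℝ)/(N:ℝ)) * w' ((m:ℝ)/(N':ℝ)) * Cb else 0))) :=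
            Finset.sum_le_sum fun n hn => Finset.sum_le_sum fun m hm => hpoint n hn m hm
      _ = _ := by
            simp only [Finset.sum_add_distrib]
    refine hstep.trans ?_
    have e1 : ∑ n ∈ I, ∑ m ∈ J, w ((n:ℝ)/(N:ℝ)) * w' ((m:ℝ)/(N':ℝ)) * (ε/2)
        = wsum w N * wsum w' N' * (ε/2) := by
      rw [wsum, wsum, Finset.sum_mul_sum, Finset.sum_mul]
      refine Finset.sum_congr rfl fun n _ => ?_
      rw [Finset.sum_mul]
    have e2 : ∑ n ∈ I, ∑ m ∈ J, (if n < K then w ((n:ℝ)/(N:ℝ)) * w' ((m:ℝ)/(N':ℝ)) * Cb else 0)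
        ≤ (K:ℝ) * Cw * Cb * wsum w' N' := by
      have inner : ∀ n ∈ I, ∑ m ∈ J, (if n < K then w ((n:ℝ)/(N:ℝ)) * w' ((m:ℝ)/(N':ℝ)) * Cb else 0)
          ≤ (if n < K then Cw * Cb * wsum w' N' else 0) := by
        intro n hn
        by_cases hnK : n < K
        · simp only [if_pos hnK]
          have : ∀ m ∈ J, w ((n:ℝ)/(N:ℝ)) * w' ((m:ℝ)/(N':ℝ)) * Cb
              ≤ (Cw * Cb) * w' ((m:ℝ)/(N':ℝ)) := by
            intro m hm
            have h1 := (hwn n hn).2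
            have h3 := (hwm m hm).1
            calc w ((n:ℝ)/(N:ℝ)) * w' ((m:ℝ)/(N':ℝ)) * Cb
                = w ((n:ℝ)/(N:ℝ)) * (w' ((m:ℝ)/(N':ℝ)) * Cb) := by ring
            _ ≤ Cw * (w' ((m:ℝ)/(N':ℝ)) * Cb) :=
                mul_le_mul_of_nonneg_right h1 (mul_nonneg h3 hCb0)
            _ = (Cw * Cb) * w' ((m:ℝ)/(N':ℝ)) := by ring
          calc _ ≤ ∑ m ∈ J, (Cw * Cb) * w' ((m:ℝ)/(N':ℝ)) := Finset.sum_le_sum this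
          _ = Cw * Cb * wsum w' N' := by rw [← Finset.mul_sum, wsum]
          _ = _ := by ring
        · simp only [if_neg hnK, Finset.sum_const_zero]
          exact le_rfl
      calc _ ≤ ∑ n ∈ I, (if n < K then Cw * Cb * wsum w' N' else 0) :=
            Finset.sum_le_sum inner
      _ = ∑ n ∈ I.filter (fun n => n < K), Cw * Cb * wsum w' N' := by
            rw [Finset.sum_filter]
      _ ≤ (K:ℝ) * (Cw * Cb * wsum w' N') := by
            rw [Finset.sum_const, nsmul_eq_mul]
            have hcard : (I.filter (fun n => n < K)).card ≤ K := by
              have hsub : I.filter (fun n => n < K) ⊆ Finset.Icc 1 K := by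
                intro x hx
                rw [Finset.mem_filter, hI, Finset.mem_Icc] at hx
                rw [Finset.mem_Icc]
                omega
              calc _ ≤ (Finset.Icc 1 K).card := Finset.card_le_card hsub
              _ = K := by rw [Nat.card_Icc]; omega
            have : (0:ℝ) ≤ Cw * Cb * wsum w' N' := by positivity
            apply mul_le_mul_of_nonneg_right _ this
            exact_mod_cast hcard
      _ = (K:ℝ) * Cw * Cb * wsum w' N' := by ring
    have e3 : ∑ n ∈ I, ∑ m ∈ J, (if m < K then w ((n:ℝ)/(N:ℝ)) * w' ((m:ℝ)/(N':ℝ)) * Cb else 0)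
        ≤ (K:ℝ) * Cw' * Cb * wsum w N := by
      have inner : ∀ n ∈ I, ∑ m ∈ J, (if m < K then w ((n:ℝ)/(N:ℝ)) * w' ((m:ℝ)/(N':ℝ)) * Cb else 0)
          ≤ w ((n:ℝ)/(N:ℝ)) * ((K:ℝ) * Cw' * Cb) := by
        intro n hn
        have : ∀ m ∈ J, (if m < K then w ((n:ℝ)/(N:ℝ)) * w' ((m:ℝ)/(N':ℝ)) * Cb else 0)
            ≤ (if m < K then w ((n:ℝ)/(N:ℝ)) * (Cw' * Cb) else 0) := by
          intro m hm
          by_cases hmK : m < K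
          · simp only [if_pos hmK]
            have h1 := (hwm m hm).2
            have h3 := (hwn n hn).1
            calc w ((n:ℝ)/(N:ℝ)) * w' ((m:ℝ)/(N':ℝ)) * Cb
                = (w ((n:ℝ)/(N:ℝ)) * Cb) * w' ((m:ℝ)/(N':ℝ)) := by ring
            _ ≤ (w ((n:ℝ)/(N:ℝ)) * Cb) * Cw' :=
                mul_le_mul_of_nonneg_left h1 (mul_nonneg h3 hCb0)
            _ = w ((n:ℝ)/(N:ℝ)) * (Cw' * Cb) := by ring
          · simp only [if_neg hmK]
            exact le_rfl
        calc _ ≤ ∑ m ∈ J, (if m < K then w ((n:ℝ)/(N:ℝ)) * (Cw' * Cb) else 0) :=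
              Finset.sum_le_sum this
        _ = ∑ m ∈ J.filter (fun m => m < K), w ((n:ℝ)/(N:ℝ)) * (Cw' * Cb) := by
              rw [Finset.sum_filter]
        _ ≤ (K:ℝ) * (w ((n:ℝ)/(N:ℝ)) * (Cw' * Cb)) := by
              rw [Finset.sum_const, nsmul_eq_mul]
              have hcard : (J.filter (fun m => m < K)).card ≤ K := by
                have hsub : J.filter (fun m => m < K) ⊆ Finset.Icc 1 K := by
                  intro x hx
                  rw [Finset.mem_filter, hJ, Finset.mem_Icc] at hx
                  rw [Finset.mem_Icc]
                  omega
                calc _ ≤ (Finset.Icc 1 K).card := Finset.card_le_card hsub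
                _ = K := by rw [Nat.card_Icc]; omega
              have h4 : (0:ℝ) ≤ w ((n:ℝ)/(N:ℝ)) * (Cw' * Cb) := by
                have := (hwn n hn).1
                positivity
              apply mul_le_mul_of_nonneg_right _ h4
              exact_mod_cast hcard
        _ = w ((n:ℝ)/(N:ℝ)) * ((K:ℝ) * Cw' * Cb) := by ring
      calc _ ≤ ∑ n ∈ I, w ((n:ℝ)/(N:ℝ)) * ((K:ℝ) * Cw' * Cb) := Finset.sum_le_sum inner
      _ = wsum w N * ((K:ℝ) * Cw' * Cb) := by rw [← Finset.sum_mul, wsum]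
      _ = (K:ℝ) * Cw' * Cb * wsum w N := by ring
    have e4 : ∑ n ∈ I, ∑ m ∈ J, (if n < m + K ∧ m < n + K then
          w ((n:ℝ)/(N:ℝ)) * w' ((m:ℝ)/(N':ℝ)) * Cb else 0)
        ≤ 2*(K:ℝ) * Cw' * Cb * wsum w N := by
      have inner : ∀ n ∈ I, ∑ m ∈ J, (if n < m + K ∧ m < n + K then
            w ((n:ℝ)/(N:ℝ)) * w' ((m:ℝ)/(N':ℝ)) * Cb else 0)
          ≤ w ((n:ℝ)/(N:ℝ)) * (2*(K:ℝ) * Cw' * Cb) := by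
        intro n hn
        have hstep : ∀ m ∈ J, (if n < m + K ∧ m < n + K then
              w ((n:ℝ)/(N:ℝ)) * w' ((m:ℝ)/(N':ℝ)) * Cb else 0)
            ≤ (if n < m + K ∧ m < n + K then w ((n:ℝ)/(N:ℝ)) * (Cw' * Cb) else 0) := by
          intro m hm
          by_cases hmK : n < m + K ∧ m < n + K
          · simp only [if_pos hmK]
            have h1 := (hwm m hm).2
            have h3 := (hwn n hn).1
            calc w ((n:ℝ)/(N:ℝ)) * w' ((m:ℝ)/(N':ℝ)) * Cb
                = (w ((n:ℝ)/(N:ℝ)) * Cb) * w' ((m:ℝ)/(N':ℝ)) := by ring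
            _ ≤ (w ((n:ℝ)/(N:ℝ)) * Cb) * Cw' :=
                mul_le_mul_of_nonneg_left h1 (mul_nonneg h3 hCb0)
            _ = w ((n:ℝ)/(N:ℝ)) * (Cw' * Cb) := by ring
          · simp only [if_neg hmK]
            exact le_rfl
        calc _ ≤ ∑ m ∈ J, (if n < m + K ∧ m < n + K then
              w ((n:ℝ)/(N:ℝ)) * (Cw' * Cb) else 0) := Finset.sum_le_sum hstep
        _ = ∑ m ∈ J.filter (fun m => n < m + K ∧ m < n + K),
              w ((n:ℝ)/(N:ℝ)) * (Cw' * Cb) := by rw [Finset.sum_filter]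
        _ ≤ (2*(K:ℝ)) * (w ((n:ℝ)/(N:ℝ)) * (Cw' * Cb)) := by
              rw [Finset.sum_const, nsmul_eq_mul]
              have hcard : (J.filter (fun m => n < m + K ∧ m < n + K)).card ≤ 2*K := by
                have hsub : J.filter (fun m => n < m + K ∧ m < n + K)
                    ⊆ Finset.Icc (n + 1 - K) (n + K - 1) := by
                  intro x hx
                  rw [Finset.mem_filter, hJ, Finset.mem_Icc] at hx
                  rw [Finset.mem_Icc]
                  omega
                calc _ ≤ (Finset.Icc (n + 1 - K) (n + K - 1)).card := Finset.card_le_card hsub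
                _ ≤ 2*K := by rw [Nat.card_Icc]; omega
              have h4 : (0:ℝ) ≤ w ((n:ℝ)/(N:ℝ)) * (Cw' * Cb) := by
                have := (hwn n hn).1
                positivity
              apply mul_le_mul_of_nonneg_right _ h4
              exact_mod_cast hcard
        _ = w ((n:ℝ)/(N:ℝ)) * (2*(K:ℝ) * Cw' * Cb) := by ring
      calc _ ≤ ∑ n ∈ I, w ((n:ℝ)/(N:ℝ)) * (2*(K:ℝ) * Cw' * Cb) := Finset.sum_le_sum inner
      _ = wsum w N * (2*(K:ℝ) * Cw' * Cb) := by rw [← Finset.sum_mul, wsum]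
      _ = 2*(K:ℝ) * Cw' * Cb * wsum w N := by ring
    rw [e1]
    linarith
  -- final numeric estimate
  have hfin : (wsum w N)⁻¹ * (wsum w' N')⁻¹ *
      |∑ n ∈ I, ∑ m ∈ J, w ((n:ℝ)/(N:ℝ)) * w' ((m:ℝ)/(N':ℝ)) * (c n m - L)|
      ≤ ε/2 + ((K:ℝ) * Cw * Cb / wsum w N + 3*(K:ℝ) * Cw' * Cb / wsum w' N') := by
    have hb := habs.trans hsum1
    have hinv : (0:ℝ) ≤ (wsum w N)⁻¹ * (wsum w' N')⁻¹ := by positivity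
    calc (wsum w N)⁻¹ * (wsum w' N')⁻¹ *
        |∑ n ∈ I, ∑ m ∈ J, w ((n:ℝ)/(N:ℝ)) * w' ((m:ℝ)/(N':ℝ)) * (c n m - L)|
        ≤ (wsum w N)⁻¹ * (wsum w' N')⁻¹ *
          (wsum w N * wsum w' N' * (ε/2)
            + ((K:ℝ) * Cw * Cb * wsum w' N' + (K:ℝ) * Cw' * Cb * wsum w N
              + 2*(K:ℝ) * Cw' * Cb * wsum w N)) := mul_le_mul_of_nonneg_left hb hinv
    _ = ε/2 + ((K:ℝ) * Cw * Cb / wsum w N + 3*(K:ℝ) * Cw' * Cb / wsum w' N') := by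
        field_simp
        ring
  have hb1 : (K:ℝ) * Cw * Cb / wsum w N ≤ ε/8 := by
    have hge : (K:ℝ) * Cw * Cb / (ε/8) ≤ wsum w N := le_trans (le_max_right _ _) hp1
    rw [div_le_iff₀ (by linarith : (0:ℝ) < ε/8)] at hge
    rw [div_le_iff₀ hWpos]
    linarith
  have hb2 : 3*(K:ℝ) * Cw' * Cb / wsum w' N' ≤ ε/8 := by
    have hge : 3*(K:ℝ) * Cw' * Cb / (ε/8) ≤ wsum w' N' := le_trans (le_max_right _ _) hp2
    rw [div_le_iff₀ (by linarith : (0:ℝ) < ε/8)] at hge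
    rw [div_le_iff₀ hW'pos]
    linarith
  calc _ ≤ ε/2 + ((K:ℝ) * Cw * Cb / wsum w N + 3*(K:ℝ) * Cw' * Cb / wsum w' N') := hfin
  _ < ε := by linarith

set_option maxHeartbeats 1600000 in
lemma correlation_structure
    {c : ℕ → ℕ → ℝ} (hsymm : ∀ n m, c n m = c m n)
    (hl : ∀ m : ℕ, 1 ≤ m → ∃ l : ℝ, Tendsto (fun n => c n m) atTop (𝓝 l))
    {ω : ℕ → ℝ} (hω : Tendsto ω atTop (𝓝 0))
    (hshift : ∀ k k₁ k₂ : ℕ, 1 ≤ k → k ≤ k₁ → k₁ ≤ k₂ → ∀ s : ℕ,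
      |c k₁ k₂ - c (k₁ + s) (k₂ + s)| ≤ ω k)
    (hω0 : ∀ k, 1 ≤ k → 0 ≤ ω k) :
    ∃ (l : ℕ → ℝ) (L : ℝ),
      (∀ m, 1 ≤ m → Tendsto (fun n => c n m) atTop (𝓝 (l m))) ∧
      Tendsto l atTop (𝓝 L) ∧
      (∀ ε > 0, ∃ K : ℕ, ∀ n m : ℕ, K ≤ n → K ≤ m → (n + K ≤ m ∨ m + K ≤ n) →
        |c n m - L| ≤ ε) := by
  -- the monotone tail envelope of ω
  have hbd : BddAbove (Set.range ω) := hω.bddAbove_range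
  set Ω : ℕ → ℝ := fun k => sSup (Set.range fun j => ω (k + j)) with hΩdef
  have hbd' : ∀ k, BddAbove (Set.range fun j => ω (k + j)) := by
    intro k
    apply hbd.mono
    rintro x ⟨j, rfl⟩
    exact ⟨k + j, rfl⟩
  have hωΩ : ∀ k j, ω (k + j) ≤ Ω k := fun k j => le_csSup (hbd' k) ⟨j, rfl⟩
  have hωΩ' : ∀ k, ω k ≤ Ω k := fun k => by simpa using hωΩ k 0
  have hΩanti : Antitone Ω := by
    intro k k' hk
    apply csSup_le_csSup (hbd' k) (Set.range_nonempty _)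
    rintro x ⟨j, rfl⟩
    refine ⟨k' - k + j, ?_⟩
    show ω (k + (k' - k + j)) = ω (k' + j)
    rw [show k + (k' - k + j) = k' + j by omega]
  have hΩ0 : ∀ k, 1 ≤ k → 0 ≤ Ω k := fun k hk => le_trans (hω0 k hk) (hωΩ' k)
  have hΩt : Tendsto Ω atTop (𝓝 0) := by
    rw [Metric.tendsto_atTop]
    intro ε hε
    obtain ⟨K₀, hK₀⟩ := Metric.tendsto_atTop.mp hω (ε/2) (by linarith)
    refine ⟨max K₀ 1, fun k hk => ?_⟩
    have hk1 : 1 ≤ k := le_trans (le_max_right _ _) hk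
    have hub : Ω k ≤ ε/2 := by
      apply csSup_le (Set.range_nonempty _)
      rintro x ⟨j, rfl⟩
      have := hK₀ (k + j) (by omega)
      rw [Real.dist_eq, sub_zero] at this
      exact le_trans (le_abs_self _) this.le
    rw [Real.dist_eq, sub_zero, abs_of_nonneg (hΩ0 k hk1)]
    linarith
  have hshiftΩ : ∀ k k₁ k₂ : ℕ, 1 ≤ k → k ≤ k₁ → k₁ ≤ k₂ → ∀ s : ℕ,
      |c k₁ k₂ - c (k₁ + s) (k₂ + s)| ≤ Ω k :=
    fun k k₁ k₂ h1 h2 h3 s => le_trans (hshift k k₁ k₂ h1 h2 h3 s) (hωΩ' k)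
  -- the diagonal limits γ
  have hcauchy : ∀ d : ℕ, CauchySeq (fun k => c (k+1) (k+1+d)) := by
    intro d
    apply cauchySeq_of_le_tendsto_0 (fun N => Ω (N+1))
    · intro n m N hn hm
      have main : ∀ a b : ℕ, a ≤ b →
          dist (c (a+1) (a+1+d)) (c (b+1) (b+1+d)) ≤ Ω (a+1) := by
        intro a b hab
        have h := hshiftΩ (a+1) (a+1) (a+1+d) (by omega) le_rfl (by omega) (b - a)
        have e1 : a + 1 + (b - a) = b + 1 := by omega
        have e2 : a + 1 + d + (b - a) = b + 1 + d := by omega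
        rw [e1, e2] at h
        rwa [Real.dist_eq]
      rcases le_total n m with h | h
      · exact le_trans (main n m h) (hΩanti (by omega))
      · rw [dist_comm]
        exact le_trans (main m n h) (hΩanti (by omega))
    · exact hΩt.comp (tendsto_add_atTop_nat 1)
  choose γ hγ using fun d => cauchySeq_tendsto_of_complete (hcauchy d)
  have hγclose : ∀ m, 1 ≤ m → ∀ d, |c m (m + d) - γ d| ≤ Ω m := by
    intro m hm d
    have htend : Tendsto (fun k => |c m (m+d) - c (k+1) (k+1+d)|) atTop
        (𝓝 |c m (m+d) - γ d|) := (tendsto_const_nhds.sub (hγ d)).abs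
    refine le_of_tendsto htend ?_
    rw [eventually_atTop]
    refine ⟨m, fun k hk => ?_⟩
    have h := hshiftΩ m m (m+d) hm le_rfl (Nat.le_add_right m d) (k + 1 - m)
    have e1 : m + (k + 1 - m) = k + 1 := by omega
    have e2 : m + d + (k + 1 - m) = k + 1 + d := by omega
    rwa [e1, e2] at h
  -- the limit correlations l
  set l : ℕ → ℝ := fun m => limUnder atTop (fun n => c n m) with hldef
  have hl' : ∀ m, 1 ≤ m → Tendsto (fun n => c n m) atTop (𝓝 (l m)) := by
    intro m hm
    obtain ⟨a, ha⟩ := hl m hm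
    rwa [show l m = a from ha.limUnder_eq]
  have hld : ∀ m, 1 ≤ m → Tendsto (fun d => c m (m + d)) atTop (𝓝 (l m)) := by
    intro m hm
    have haux : Tendsto (fun d : ℕ => m + d) atTop atTop := by
      have := tendsto_add_atTop_nat m
      refine this.congr fun d => ?_
      omega
    have h1 : Tendsto (fun d : ℕ => c (m + d) m) atTop (𝓝 (l m)) := (hl' m hm).comp haux
    exact h1.congr fun d => hsymm (m + d) m
  -- γ is Cauchy, converging to L
  have hcγ : CauchySeq γ := by
    rw [Metric.cauchySeq_iff']
    intro ε hε
    obtain ⟨K₀, hK₀⟩ := Metric.tendsto_atTop.mp hΩt (ε/5) (by linarith)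
    set m := max K₀ 1 with hmdef
    have hm1 : 1 ≤ m := le_max_right _ _
    have hΩm : Ω m < ε/5 := by
      have := hK₀ m (le_max_left _ _)
      rwa [Real.dist_eq, sub_zero, abs_of_nonneg (hΩ0 m hm1)] at this
    obtain ⟨D, hD⟩ := Metric.tendsto_atTop.mp (hld m hm1) (ε/5) (by linarith)
    refine ⟨D, fun n hn => ?_⟩
    have h1 : |γ n - c m (m + n)| ≤ Ω m := by
      rw [abs_sub_comm]; exact hγclose m hm1 n
    have h2 : |c m (m + n) - l m| < ε/5 := by
      have := hD n hn
      rwa [Real.dist_eq] at this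
    have h3 : |l m - c m (m + D)| < ε/5 := by
      have := hD D le_rfl
      rw [Real.dist_eq] at this
      rwa [abs_sub_comm]
    have h4 : |c m (m + D) - γ D| ≤ Ω m := hγclose m hm1 D
    rw [Real.dist_eq]
    calc |γ n - γ D| ≤ |γ n - c m (m + n)| + |c m (m + n) - γ D| := abs_sub_le _ _ _
    _ ≤ |γ n - c m (m + n)| + (|c m (m + n) - l m| + |l m - γ D|) := by
        have := abs_sub_le (c m (m + n)) (l m) (γ D)
        linarith
    _ ≤ |γ n - c m (m + n)| + (|c m (m + n) - l m|
          + (|l m - c m (m + D)| + |c m (m + D) - γ D|)) := by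
        have := abs_sub_le (l m) (c m (m + D)) (γ D)
        linarith
    _ < ε := by linarith
  obtain ⟨L, hL⟩ := cauchySeq_tendsto_of_complete hcγ
  -- l tends to L
  have hlL : ∀ m, 1 ≤ m → |l m - L| ≤ Ω m := by
    intro m hm
    have htend : Tendsto (fun d => |c m (m + d) - γ d|) atTop (𝓝 |l m - L|) :=
      ((hld m hm).sub hL).abs
    exact le_of_tendsto htend (Eventually.of_forall fun d => hγclose m hm d)
  have hlt : Tendsto l atTop (𝓝 L) := by
    have hlow : ∀ᶠ m in atTop, L - Ω m ≤ l m := by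
      rw [eventually_atTop]
      exact ⟨1, fun m hm => by have := (abs_le.mp (hlL m hm)).1; linarith⟩
    have hhigh : ∀ᶠ m in atTop, l m ≤ L + Ω m := by
      rw [eventually_atTop]
      exact ⟨1, fun m hm => by have := (abs_le.mp (hlL m hm)).2; linarith⟩
    have hg : Tendsto (fun m : ℕ => L - Ω m) atTop (𝓝 L) := by
      have h := Tendsto.sub (tendsto_const_nhds : Tendsto (fun _ : ℕ => L) atTop (𝓝 L)) hΩt
      simpa using h
    have hh : Tendsto (fun m : ℕ => L + Ω m) atTop (𝓝 L) := by
      have h := Tendsto.add (tendsto_const_nhds : Tendsto (fun _ : ℕ => L) atTop (𝓝 L)) hΩt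
      simpa using h
    exact tendsto_of_tendsto_of_tendsto_of_le_of_le' hg hh hlow hhigh
  refine ⟨l, L, hl', hlt, ?_⟩
  intro ε hε
  obtain ⟨K₀, hK₀⟩ := Metric.tendsto_atTop.mp hΩt (ε/2) (by linarith)
  obtain ⟨K₁, hK₁⟩ := Metric.tendsto_atTop.mp hL (ε/2) (by linarith)
  refine ⟨max (max K₀ K₁) 1, fun n m hn hm hfar => ?_⟩
  set K := max (max K₀ K₁) 1 with hKdef
  have hK1 : 1 ≤ K := le_max_right _ _
  have hΩsmall : ∀ j, K ≤ j → |Ω j| < ε/2 := by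
    intro j hj
    have := hK₀ j (le_trans (le_trans (le_max_left K₀ K₁) (le_max_left _ 1)) hj)
    rwa [Real.dist_eq, sub_zero] at this
  have hγsmall : ∀ d, K ≤ d → |γ d - L| < ε/2 := by
    intro d hd
    have := hK₁ d (le_trans (le_trans (le_max_right K₀ K₁) (le_max_left _ 1)) hd)
    rwa [Real.dist_eq] at this
  rcases hfar with hcase | hcase
  · -- n + K ≤ m : base n, distance d = m - n
    have hd : K ≤ m - n := by omega
    have h1 : |c n m - γ (m - n)| ≤ Ω n := by
      have h := hγclose n (le_trans hK1 hn) (m - n)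
      rwa [show n + (m - n) = m by omega] at h
    have h2 : |γ (m - n) - L| < ε/2 := hγsmall _ hd
    have h3 : Ω n ≤ |Ω n| := le_abs_self _
    have h4 : |Ω n| < ε/2 := hΩsmall n hn
    calc |c n m - L| ≤ |c n m - γ (m - n)| + |γ (m - n) - L| := abs_sub_le _ _ _
    _ ≤ ε := by linarith
  · -- m + K ≤ n : base m
    have hd : K ≤ n - m := by omega
    have h1 : |c m n - γ (n - m)| ≤ Ω m := by
      have h := hγclose m (le_trans hK1 hm) (n - m)
      rwa [show m + (n - m) = n by omega] at h
    have h2 : |γ (n - m) - L| < ε/2 := hγsmall _ hd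
    have h3 : Ω m ≤ |Ω m| := le_abs_self _
    have h4 : |Ω m| < ε/2 := hΩsmall m hm
    rw [hsymm n m]
    calc |c m n - L| ≤ |c m n - γ (n - m)| + |γ (n - m) - L| := abs_sub_le _ _ _
    _ ≤ ε := by linarith

lemma clamp_lip (C x z : ℝ) :
    |max (-C) (min C x) - max (-C) (min C z)| ≤ |x - z| := by
  have h1 := le_abs_self (x - z)
  have h2 := neg_abs_le (x - z)
  have h0 := abs_nonneg (x - z)
  simp only [max_def, min_def]
  split_ifs <;> rw [abs_le] <;> constructor <;> linarith

lemma clamp_bound {C : ℝ} (hC : 0 ≤ C) (x : ℝ) : |max (-C) (min C x)| ≤ C := by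
  rw [abs_le]
  exact ⟨le_max_left _ _, max_le (by linarith) (min_le_left _ _)⟩

lemma clamp_eq {C x : ℝ} (h : |x| ≤ C) : max (-C) (min C x) = x := by
  rw [abs_le] at h
  rw [min_eq_right h.2, max_eq_right h.1]

lemma bdd_meas_integrable {α : Type*} [MeasurableSpace α] {μ : Measure α} [IsFiniteMeasure μ]
    {f : α → ℝ} (hf : Measurable f) {C : ℝ} (hC : ∀ y, |f y| ≤ C) : Integrable f μ :=
  (integrable_const C).mono' hf.aestronglyMeasurable (Eventually.of_forall fun y => by
    rw [Real.norm_eq_abs]; exact hC y)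

lemma tendsto_integral_abs_of_sq {α : Type*} [MeasurableSpace α] {μ : Measure α}
    [IsFiniteMeasure μ] {h : ℕ → α → ℝ}
    (hint : ∀ N, Integrable (h N) μ)
    (hint2 : ∀ N, Integrable (fun y => h N y * h N y) μ)
    (hsq : Tendsto (fun N => ∫ y, h N y * h N y ∂μ) atTop (𝓝 0)) :
    Tendsto (fun N => ∫ y, |h N y| ∂μ) atTop (𝓝 0) := by
  rw [Metric.tendsto_atTop]
  intro ε hε
  set V := (μ Set.univ).toReal with hV
  have hV0 : 0 ≤ V := ENNReal.toReal_nonneg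
  set s := ε / (1 + V) with hs
  have hs0 : 0 < s := div_pos hε (by linarith)
  obtain ⟨N₀, hN₀⟩ := Metric.tendsto_atTop.mp hsq (s * ε / 4) (by positivity)
  refine ⟨N₀, fun N hN => ?_⟩
  have hsqN : ∫ y, h N y * h N y ∂μ < s * ε / 4 := by
    have h' := hN₀ N hN
    rw [Real.dist_eq, sub_zero] at h'
    exact lt_of_le_of_lt (le_abs_self _) h'
  have hpt : ∀ y, |h N y| ≤ (h N y * h N y) / (2*s) + s/2 := by
    intro y
    have hsq' : 0 ≤ (|h N y| - s)^2 := sq_nonneg _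
    have habs : |h N y| * |h N y| = h N y * h N y := abs_mul_abs_self _
    rw [div_add' _ _ _ (by positivity), le_div_iff₀ (by positivity)]
    nlinarith
  have hmono : ∫ y, |h N y| ∂μ ≤ ∫ y, ((h N y * h N y) / (2*s) + s/2) ∂μ :=
    integral_mono (hint N).abs (((hint2 N).div_const _).add (integrable_const _))
      hpt
  have heval : ∫ y, ((h N y * h N y) / (2*s) + s/2) ∂μ
      = (∫ y, h N y * h N y ∂μ) / (2*s) + (s/2) * V := by
    rw [integral_add ((hint2 N).div_const _) (integrable_const _), integral_div,
      integral_const, smul_eq_mul, hV, measureReal_def]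
    ring
  have hterm1 : (∫ y, h N y * h N y ∂μ) / (2*s) ≤ ε/8 := by
    rw [div_le_iff₀ (by positivity)]
    nlinarith
  have hterm2 : (s/2) * V ≤ ε/2 := by
    have hseq : s * (1 + V) = ε := by
      rw [hs]; field_simp
    nlinarith
  rw [Real.dist_eq, sub_zero,
    abs_of_nonneg (integral_nonneg fun y => abs_nonneg _)]
  calc ∫ y, |h N y| ∂μ ≤ (∫ y, h N y * h N y ∂μ) / (2*s) + (s/2) * V := by
        rw [← heval]; exact hmono
  _ ≤ ε/8 + ε/2 := by linarith
  _ < ε := by linarith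

lemma corr_main {M D : ℕ} (Q : Set (Fin M → ℝ)) (hQfin : volume Q < ⊤)
    (U : ℕ → (Fin M → ℝ) → EuclideanSpace ℝ (Fin D)) (hU : ∀ n, Measurable (U n))
    {b : EuclideanSpace ℝ (Fin D) → ℝ} (hbc : Continuous b) (hbs : HasCompactSupport b)
    (h2 : ∀ m : ℕ, 1 ≤ m → ∃ lm : ℝ,
      Tendsto (fun n : ℕ => ∫ y in Q, b (U n y) * b (U m y)) atTop (𝓝 lm))
    (h3 : ∃ ω : ℕ → ℝ, Tendsto ω atTop (𝓝 0) ∧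
      ∀ k k₁ k₂ : ℕ, 1 ≤ k → k ≤ k₁ → k₁ ≤ k₂ → ∀ n : ℕ,
        |∫ y in Q,
            (b (U k₁ y) * b (U k₂ y) - b (U (k₁ + n) y) * b (U (k₂ + n) y))| ≤ ω k) :
    ∃ (l : ℕ → ℝ) (L : ℝ) (Cc : ℝ),
      (∀ n m : ℕ, |∫ y in Q, b (U n y) * b (U m y)| ≤ Cc) ∧
      (∀ m, 1 ≤ m →
        Tendsto (fun n : ℕ => ∫ y in Q, b (U n y) * b (U m y)) atTop (𝓝 (l m))) ∧
      Tendsto l atTop (𝓝 L) ∧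
      (∀ ε > 0, ∃ K : ℕ, ∀ n m : ℕ, K ≤ n → K ≤ m → (n + K ≤ m ∨ m + K ≤ n) →
        |(∫ y in Q, b (U n y) * b (U m y)) - L| ≤ ε) := by
  haveI : IsFiniteMeasure (volume.restrict Q) := ⟨by rwa [Measure.restrict_apply_univ]⟩
  obtain ⟨Cb', hCb'⟩ := hbc.bounded_above_of_compact_support hbs
  set Cb := max Cb' 0 with hCbdef
  have hCb : ∀ x, |b x| ≤ Cb := fun x =>
    le_trans (by rw [← Real.norm_eq_abs]; exact hCb' x) (le_max_left _ _)
  have hCb0 : 0 ≤ Cb := le_max_right _ _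
  have hmeas : ∀ n m : ℕ, Measurable (fun y => b (U n y) * b (U m y)) := fun n m =>
    ((hbc.measurable.comp (hU n)).mul (hbc.measurable.comp (hU m)))
  have hprodbd : ∀ n m : ℕ, ∀ y, |b (U n y) * b (U m y)| ≤ Cb * Cb := by
    intro n m y
    rw [abs_mul]
    exact mul_le_mul (hCb _) (hCb _) (abs_nonneg _) hCb0
  have hint : ∀ n m : ℕ, Integrable (fun y => b (U n y) * b (U m y)) (volume.restrict Q) :=
    fun n m => bdd_meas_integrable (hmeas n m) (hprodbd n m)
  set c : ℕ → ℕ → ℝ := fun n m => ∫ y in Q, b (U n y) * b (U m y) with hcdef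
  have hsymm : ∀ n m, c n m = c m n := fun n m =>
    integral_congr_ae (Eventually.of_forall fun y => mul_comm _ _)
  obtain ⟨ω, hω, hω3⟩ := h3
  have hshift : ∀ k k₁ k₂ : ℕ, 1 ≤ k → k ≤ k₁ → k₁ ≤ k₂ → ∀ s : ℕ,
      |c k₁ k₂ - c (k₁ + s) (k₂ + s)| ≤ ω k := by
    intro k k₁ k₂ hk hk1 hk2 s
    simp only [hcdef]
    rw [← integral_sub (hint k₁ k₂) (hint (k₁+s) (k₂+s))]
    exact hω3 k k₁ k₂ hk hk1 hk2 s
  have hω0 : ∀ k, 1 ≤ k → 0 ≤ ω k := by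
    intro k hk
    have h := hω3 k k k hk le_rfl le_rfl 0
    simpa using h
  have hCc : ∀ n m, |c n m| ≤ Cb * Cb * ((volume.restrict Q) Set.univ).toReal := by
    intro n m
    simp only [hcdef]
    rw [← Real.norm_eq_abs]
    exact norm_integral_le_of_norm_le_const (Eventually.of_forall fun y => by
      rw [Real.norm_eq_abs]; exact hprodbd n m y)
  obtain ⟨l, L, hl, hlL, hgood⟩ := correlation_structure hsymm h2 hω hshift hω0
  exact ⟨l, L, _, hCc, hl, hlL, hgood⟩

lemma key_product {M D : ℕ} {Q : Set (Fin M → ℝ)}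
    {U : ℕ → (Fin M → ℝ) → EuclideanSpace ℝ (Fin D)}
    {b : EuclideanSpace ℝ (Fin D) → ℝ}
    (hintc : ∀ n m : ℕ, Integrable (fun y => b (U n y) * b (U m y)) (volume.restrict Q))
    {w w' : ℝ → ℝ} (hw : IsWeight w) (hw' : IsWeight w')
    {Cc L : ℝ} (hCc : ∀ n m : ℕ, |∫ y in Q, b (U n y) * b (U m y)| ≤ Cc)
    (hgood : ∀ ε > 0, ∃ K : ℕ, ∀ n m : ℕ, K ≤ n → K ≤ m → (n + K ≤ m ∨ m + K ≤ n) →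
      |(∫ y in Q, b (U n y) * b (U m y)) - L| ≤ ε) :
    Tendsto (fun p : ℕ × ℕ => ∫ y in Q,
        ((wsum w p.1)⁻¹ * ∑ n ∈ Finset.Icc 1 p.1, w ((n:ℝ)/(p.1:ℝ)) * b (U n y)) *
        ((wsum w' p.2)⁻¹ * ∑ m ∈ Finset.Icc 1 p.2, w' ((m:ℝ)/(p.2:ℝ)) * b (U m y)))
      (atTop ×ˢ atTop) (𝓝 L) := by
  have base := double_avg_tendsto hw hw' hCc hgood
  refine base.congr fun p => ?_
  have hpt : ∀ y, ((wsum w p.1)⁻¹ * ∑ n ∈ Finset.Icc 1 p.1, w ((n:ℝ)/(p.1:ℝ)) * b (U n y)) *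
      ((wsum w' p.2)⁻¹ * ∑ m ∈ Finset.Icc 1 p.2, w' ((m:ℝ)/(p.2:ℝ)) * b (U m y))
      = ((wsum w p.1)⁻¹ * (wsum w' p.2)⁻¹) *
        ∑ n ∈ Finset.Icc 1 p.1, ∑ m ∈ Finset.Icc 1 p.2,
          (w ((n:ℝ)/(p.1:ℝ)) * w' ((m:ℝ)/(p.2:ℝ))) * (b (U n y) * b (U m y)) := by
    intro y
    have e : (∑ n ∈ Finset.Icc 1 p.1, w ((n:ℝ)/(p.1:ℝ)) * b (U n y)) *
        (∑ m ∈ Finset.Icc 1 p.2, w' ((m:ℝ)/(p.2:ℝ)) * b (U m y))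
        = ∑ n ∈ Finset.Icc 1 p.1, ∑ m ∈ Finset.Icc 1 p.2,
            (w ((n:ℝ)/(p.1:ℝ)) * w' ((m:ℝ)/(p.2:ℝ))) * (b (U n y) * b (U m y)) := by
      rw [Finset.sum_mul_sum]
      exact Finset.sum_congr rfl fun n _ => Finset.sum_congr rfl fun m _ => by ring
    calc ((wsum w p.1)⁻¹ * ∑ n ∈ Finset.Icc 1 p.1, w ((n:ℝ)/(p.1:ℝ)) * b (U n y)) *
        ((wsum w' p.2)⁻¹ * ∑ m ∈ Finset.Icc 1 p.2, w' ((m:ℝ)/(p.2:ℝ)) * b (U m y))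
        = ((wsum w p.1)⁻¹ * (wsum w' p.2)⁻¹) *
          ((∑ n ∈ Finset.Icc 1 p.1, w ((n:ℝ)/(p.1:ℝ)) * b (U n y)) *
            (∑ m ∈ Finset.Icc 1 p.2, w' ((m:ℝ)/(p.2:ℝ)) * b (U m y))) := by ring
    _ = _ := by rw [e]
  have h1 : ∫ y in Q,
      ((wsum w p.1)⁻¹ * ∑ n ∈ Finset.Icc 1 p.1, w ((n:ℝ)/(p.1:ℝ)) * b (U n y)) *
      ((wsum w' p.2)⁻¹ * ∑ m ∈ Finset.Icc 1 p.2, w' ((m:ℝ)/(p.2:ℝ)) * b (U m y))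
      = (wsum w p.1)⁻¹ * (wsum w' p.2)⁻¹ *
        ∑ n ∈ Finset.Icc 1 p.1, ∑ m ∈ Finset.Icc 1 p.2,
          w ((n:ℝ)/(p.1:ℝ)) * w' ((m:ℝ)/(p.2:ℝ)) * ∫ y in Q, b (U n y) * b (U m y) := by
    rw [integral_congr_ae (Eventually.of_forall hpt), integral_const_mul,
      integral_finset_sum _ (fun n _ => integrable_finset_sum _
        (fun m _ => (hintc n m).const_mul _))]
    congr 1
    refine Finset.sum_congr rfl fun n _ => ?_
    rw [integral_finset_sum _ (fun m _ => (hintc n m).const_mul _)]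
    exact Finset.sum_congr rfl fun m _ => integral_const_mul _ _
  exact h1.symm

set_option maxHeartbeats 3200000 in
/-- Theorem 4.2: a strongly asymptotically stationary sequence — i.e. one
satisfying, for every `b ∈ C_c(ℝ^D)`, the strong correlation-limit condition (SuA2) and the
asymptotic correlation stationarity (SuA3) — is strongly (S)-convergent; in particular, for
every `b ∈ C_c(ℝ^D)` there is a `w`-independent `b̄ ∈ L^∞(Q)` such that the weighted
averages `(1/w_N) ∑_{n=1}^N w(n/N) b(U_n)` converge to `b̄` strongly in `L¹(Q)` for every
`w ∈ W`. -/
theorem stmt13 {M D : ℕ} (Q : Set (Fin M → ℝ)) (hQm : MeasurableSet Q)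
    (hQfin : volume Q < ⊤)
    (U : ℕ → (Fin M → ℝ) → EuclideanSpace ℝ (Fin D)) (hU : ∀ n, Measurable (U n))
    (hA : ∀ b : EuclideanSpace ℝ (Fin D) → ℝ, Continuous b → HasCompactSupport b →
      (∀ m : ℕ, 1 ≤ m → ∃ l : ℝ,
        Tendsto (fun n : ℕ => ∫ y in Q, b (U n y) * b (U m y)) atTop (𝓝 l)) ∧
      (∃ ω : ℕ → ℝ, Tendsto ω atTop (𝓝 0) ∧
        ∀ k k₁ k₂ : ℕ, 1 ≤ k → k ≤ k₁ → k₁ ≤ k₂ → ∀ n : ℕ,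
          |∫ y in Q,
              (b (U k₁ y) * b (U k₂ y) - b (U (k₁ + n) y) * b (U (k₂ + n) y))| ≤ ω k)) :
    StronglySConv Q U ∧
    (∀ b : EuclideanSpace ℝ (Fin D) → ℝ, Continuous b → HasCompactSupport b →
      ∃ bbar : (Fin M → ℝ) → ℝ, Measurable bbar ∧ (∃ C : ℝ, ∀ y, |bbar y| ≤ C) ∧
        ∀ w : ℝ → ℝ, IsWeight w →
          Tendsto (fun N : ℕ =>
              ∫ y in Q, |(wsum w N)⁻¹ *
                  (∑ n ∈ Finset.Icc 1 N, w ((n : ℝ) / (N : ℝ)) * b (U n y)) - bbar y|)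
            atTop (𝓝 0)) := by
  have hw₀ : IsWeight (fun _ : ℝ => (1:ℝ)) :=
    ⟨contDiffOn_const, fun z _ => zero_le_one, by simp⟩
  constructor
  · -- Strong (S)-convergence
    intro b hbc hbs
    obtain ⟨l, L, Cc, hCc, hl, hlL, hgood⟩ :=
      corr_main Q hQfin U hU hbc hbs (hA b hbc hbs).1 (hA b hbc hbs).2
    refine ⟨l, ?_, ?_⟩
    · intro w hw m hm
      exact weighted_avg_tendsto hw (hl m hm)
    · intro w hw
      refine ⟨L, ?_, weighted_avg_tendsto hw hlL⟩
      have hdouble := double_avg_tendsto hw hw hCc hgood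
      have hdiag : Tendsto (fun N : ℕ => (N, N)) atTop
          ((atTop : Filter ℕ) ×ˢ (atTop : Filter ℕ)) := tendsto_id.prodMk tendsto_id
      have hcomp := hdouble.comp hdiag
      refine hcomp.congr fun N => ?_
      simp only [Function.comp_apply]
      rw [sq, mul_inv]
  · -- L¹ convergence of weighted averages
    intro b hbc hbs
    haveI : IsFiniteMeasure (volume.restrict Q) := ⟨by rwa [Measure.restrict_apply_univ]⟩
    haveI : Fact ((1:ENNReal) ≤ 2) := ⟨one_le_two⟩
    obtain ⟨Cb', hCb'⟩ := hbc.bounded_above_of_compact_support hbs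
    set Cb := max Cb' 0 with hCbdef
    have hCb : ∀ x, |b x| ≤ Cb := fun x =>
      le_trans (by rw [← Real.norm_eq_abs]; exact hCb' x) (le_max_left _ _)
    have hCb0 : 0 ≤ Cb := le_max_right _ _
    have hmeas : ∀ n m : ℕ, Measurable (fun y => b (U n y) * b (U m y)) := fun n m =>
      ((hbc.measurable.comp (hU n)).mul (hbc.measurable.comp (hU m)))
    have hprodbd : ∀ n m : ℕ, ∀ y, |b (U n y) * b (U m y)| ≤ Cb * Cb := by
      intro n m y
      rw [abs_mul]
      exact mul_le_mul (hCb _) (hCb _) (abs_nonneg _) hCb0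
    have hint : ∀ n m : ℕ, Integrable (fun y => b (U n y) * b (U m y))
        (volume.restrict Q) := fun n m => bdd_meas_integrable (hmeas n m) (hprodbd n m)
    obtain ⟨l, L, Cc, hCc, hl, hlL, hgood⟩ :=
      corr_main Q hQfin U hU hbc hbs (hA b hbc hbs).1 (hA b hbc hbs).2
    -- the averaged functions
    set Bf : (ℝ → ℝ) → ℕ → (Fin M → ℝ) → ℝ := fun w N y =>
      (wsum w N)⁻¹ * ∑ n ∈ Finset.Icc 1 N, w ((n:ℝ)/(N:ℝ)) * b (U n y) with hBf
    have hBmeas : ∀ w N, Measurable (Bf w N) := fun w N =>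
      measurable_const.mul (Finset.measurable_sum _ fun n _ =>
        measurable_const.mul (hbc.measurable.comp (hU n)))
    have hBbd : ∀ w : ℝ → ℝ, IsWeight w → ∀ N y, |Bf w N y| ≤ Cb := by
      intro w hw N y
      rcases eq_or_lt_of_le (wsum_nonneg hw.2.1 N) with h0 | hpos
      · simp only [hBf]
        rw [← h0, inv_zero, zero_mul, abs_zero]
        exact hCb0
      · have hsum : |∑ n ∈ Finset.Icc 1 N, w ((n:ℝ)/(N:ℝ)) * b (U n y)|
            ≤ wsum w N * Cb := by
          refine (Finset.abs_sum_le_sum_abs _ _).trans ?_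
          rw [wsum, Finset.sum_mul]
          refine Finset.sum_le_sum fun n hn => ?_
          obtain ⟨h1, h2⟩ := Finset.mem_Icc.mp hn
          rw [abs_mul, abs_of_nonneg (hw.2.1 _ (div_mem_Icc01 h1 h2))]
          exact mul_le_mul_of_nonneg_left (hCb _) (hw.2.1 _ (div_mem_Icc01 h1 h2))
        simp only [hBf]
        rw [abs_mul, abs_inv, abs_of_pos hpos]
        calc (wsum w N)⁻¹ * |∑ n ∈ Finset.Icc 1 N, w ((n:ℝ)/(N:ℝ)) * b (U n y)|
            ≤ (wsum w N)⁻¹ * (wsum w N * Cb) := by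
              apply mul_le_mul_of_nonneg_left hsum (by positivity)
        _ = Cb := by field_simp
    have hBmem : ∀ w : ℝ → ℝ, IsWeight w → ∀ N, MemLp (Bf w N) 2 (volume.restrict Q) :=
      fun w hw N => MemLp.of_bound (hBmeas w N).aestronglyMeasurable Cb
        (Eventually.of_forall fun y => by rw [Real.norm_eq_abs]; exact hBbd w hw N y)
    clear_value Bf
    set F : ∀ w : ℝ → ℝ, IsWeight w → ℕ → Lp ℝ 2 (volume.restrict Q) :=
      fun w hw N => MemLp.toLp _ (hBmem w hw N) with hF
    clear_value F
    have hinner : ∀ (w : ℝ → ℝ) (hw : IsWeight w) (w' : ℝ → ℝ) (hw' : IsWeight w')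
        (N N' : ℕ), (inner ℝ (F w hw N) (F w' hw' N') : ℝ)
          = ∫ y in Q, Bf w N y * Bf w' N' y := by
      intro w hw w' hw' N N'
      rw [L2.inner_def]
      refine integral_congr_ae ?_
      filter_upwards [MemLp.coeFn_toLp (hBmem w hw N), MemLp.coeFn_toLp (hBmem w' hw' N')]
        with y h1 h2
      simp only [hF] at h1 h2 ⊢
      rw [h1, h2]
      simp [RCLike.inner_apply]
      ring
    have hnorm : ∀ (w : ℝ → ℝ) (hw : IsWeight w) (N : ℕ),
        ‖F w hw N‖^2 = ∫ y in Q, Bf w N y * Bf w N y := by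
      intro w hw N
      rw [← real_inner_self_eq_norm_sq]
      exact hinner w hw w hw N N
    have hkey : ∀ (w : ℝ → ℝ) (hw : IsWeight w) (w' : ℝ → ℝ) (hw' : IsWeight w'),
        Tendsto (fun p : ℕ × ℕ => ∫ y in Q, Bf w p.1 y * Bf w' p.2 y)
          (atTop ×ˢ atTop) (𝓝 L) := by
      intro w hw w' hw'
      have h := key_product (b := b) hint hw hw' hCc hgood
      refine h.congr fun p => ?_
      simp only [hBf]
    have hdiffnorm : ∀ (w : ℝ → ℝ) (hw : IsWeight w) (w' : ℝ → ℝ) (hw' : IsWeight w'),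
        Tendsto (fun p : ℕ × ℕ => ‖F w hw p.1 - F w' hw' p.2‖) (atTop ×ˢ atTop) (𝓝 0) := by
      intro w hw w' hw'
      have h11 : Tendsto (fun p : ℕ × ℕ => ∫ y in Q, Bf w p.1 y * Bf w p.1 y)
          (atTop ×ˢ atTop) (𝓝 L) :=
        (hkey w hw w hw).comp ((tendsto_fst).prodMk (tendsto_fst))
      have h22 : Tendsto (fun p : ℕ × ℕ => ∫ y in Q, Bf w' p.2 y * Bf w' p.2 y)
          (atTop ×ˢ atTop) (𝓝 L) :=
        (hkey w' hw' w' hw').comp ((tendsto_snd).prodMk (tendsto_snd))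
      have h12 := hkey w hw w' hw'
      have hsq : Tendsto (fun p : ℕ × ℕ => ‖F w hw p.1 - F w' hw' p.2‖^2)
          (atTop ×ˢ atTop) (𝓝 0) := by
        have hcomb := (h11.sub (h12.const_mul (2:ℝ))).add h22
        rw [show L - 2 * L + L = (0:ℝ) by ring] at hcomb
        refine hcomb.congr fun p => ?_
        rw [norm_sub_sq_real, hnorm w hw p.1, hnorm w' hw' p.2, hinner w hw w' hw' p.1 p.2]
      have hsqrt := (Real.continuous_sqrt.tendsto 0).comp hsq
      rw [Real.sqrt_zero] at hsqrt
      refine hsqrt.congr fun p => ?_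
      simp only [Function.comp_apply]
      exact Real.sqrt_sq (norm_nonneg _)
    -- Cauchy sequence for the constant weight
    have hcau : CauchySeq (fun N => F _ hw₀ N) := by
      rw [Metric.cauchySeq_iff]
      intro ε hε
      have h := hdiffnorm _ hw₀ _ hw₀
      rw [prod_atTop_atTop_eq] at h
      obtain ⟨P, hP⟩ := Metric.tendsto_atTop.mp h ε hε
      refine ⟨max P.1 P.2, fun m hm n hn => ?_⟩
      have h1 := hP (m, n) ⟨le_trans (le_max_left _ _) hm, le_trans (le_max_right _ _) hn⟩
      rw [Real.dist_eq, sub_zero] at h1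
      rw [dist_eq_norm]
      exact lt_of_le_of_lt (le_abs_self _) h1
    obtain ⟨G, hG⟩ := cauchySeq_tendsto_of_complete hcau
    have hGmeas : Measurable (⇑G : (Fin M → ℝ) → ℝ) := (Lp.stronglyMeasurable G).measurable
    have hGint : Integrable (⇑G) (volume.restrict Q) := (Lp.memLp G).integrable one_le_two
    have hclampmeas : Measurable (fun y => max (-Cb) (min Cb (G y))) :=
      measurable_const.max (measurable_const.min hGmeas)
    refine ⟨fun y => max (-Cb) (min Cb (G y)), hclampmeas,
      ⟨Cb, fun y => clamp_bound hCb0 _⟩, ?_⟩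
    intro w hw
    -- L² convergence of F w N to G
    have hFG : Tendsto (fun N => ‖F w hw N - G‖) atTop (𝓝 0) := by
      rw [Metric.tendsto_atTop]
      intro ε hε
      have h := hdiffnorm w hw _ hw₀
      rw [prod_atTop_atTop_eq] at h
      obtain ⟨P, hP⟩ := Metric.tendsto_atTop.mp h (ε/2) (by linarith)
      obtain ⟨M₀, hM₀⟩ := Metric.tendsto_atTop.mp hG (ε/2) (by linarith)
      refine ⟨P.1, fun N hN => ?_⟩
      set Mx := max P.2 M₀ with hMx
      have h1 := hP (N, Mx) ⟨hN, le_max_left _ _⟩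
      rw [Real.dist_eq, sub_zero] at h1
      have h1' : ‖F w hw N - F _ hw₀ Mx‖ < ε/2 := lt_of_le_of_lt (le_abs_self _) h1
      have h2 := hM₀ Mx (le_max_right _ _)
      rw [dist_eq_norm] at h2
      have htri := dist_triangle (F w hw N) (F _ hw₀ Mx) G
      rw [dist_eq_norm, dist_eq_norm, dist_eq_norm] at htri
      rw [Real.dist_eq, sub_zero, abs_of_nonneg (norm_nonneg _)]
      linarith
    -- squared integrals tend to zero
    have hsqint : Tendsto (fun N => ∫ y in Q, (Bf w N y - G y) * (Bf w N y - G y))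
        atTop (𝓝 0) := by
      have hsq2 : Tendsto (fun N => ‖F w hw N - G‖^2) atTop (𝓝 0) := by
        have hmul := hFG.mul hFG
        rw [mul_zero] at hmul
        exact hmul.congr fun N => (pow_two _).symm
      refine hsq2.congr fun N => ?_
      rw [← real_inner_self_eq_norm_sq, L2.inner_def]
      refine integral_congr_ae ?_
      filter_upwards [Lp.coeFn_sub (F w hw N) G, MemLp.coeFn_toLp (hBmem w hw N)]
        with y h1 h2
      simp only [hF] at h1 h2 ⊢
      rw [h1, Pi.sub_apply, h2]
      simp [RCLike.inner_apply]
      ring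
    have hint2 : ∀ N, Integrable (fun y => Bf w N y - G y) (volume.restrict Q) :=
      fun N => (bdd_meas_integrable (hBmeas w N) (hBbd w hw N)).sub hGint
    have hintsq : ∀ N, Integrable (fun y => (Bf w N y - G y) * (Bf w N y - G y))
        (volume.restrict Q) := by
      intro N
      have hI := L2.integrable_inner (𝕜 := ℝ) (F w hw N - G) (F w hw N - G)
      refine hI.congr ?_
      filter_upwards [Lp.coeFn_sub (F w hw N) G, MemLp.coeFn_toLp (hBmem w hw N)]
        with y h1 h2
      simp only [hF] at h1 h2 ⊢
      rw [h1, Pi.sub_apply, h2]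
      simp [RCLike.inner_apply]
      ring
    have habs : Tendsto (fun N => ∫ y in Q, |Bf w N y - G y|) atTop (𝓝 0) :=
      tendsto_integral_abs_of_sq hint2 hintsq hsqint
    -- compare with the truncated limit
    have hcomp : ∀ N, (∫ y in Q, |Bf w N y - max (-Cb) (min Cb (G y))|)
        ≤ ∫ y in Q, |Bf w N y - G y| := by
      intro N
      have hintl : Integrable (fun y => |Bf w N y - max (-Cb) (min Cb (G y))|)
          (volume.restrict Q) := by
        apply bdd_meas_integrable (((hBmeas w N).sub hclampmeas).abs) (C := Cb + Cb)
        intro y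
        rw [abs_abs]
        exact (abs_sub _ _).trans (add_le_add (hBbd w hw N y) (clamp_bound hCb0 _))
      refine integral_mono hintl (hint2 N).abs fun y => ?_
      have hlip := clamp_lip Cb (Bf w N y) (G y)
      rwa [clamp_eq (hBbd w hw N y)] at hlip
    have hfinal := squeeze_zero (g := fun N => ∫ y in Q, |Bf w N y - G y|)
      (fun N => integral_nonneg fun y => abs_nonneg _) hcomp habs
    simp only [hBf] at hfinal
    exact hfinal
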